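/- (Lemma 2) Let x and y be probability vectors with the same number of entries and let k ≥ 1 be an integer. If x^{⊗p} is majorized by y^{⊗p} for every integer p with k ≤ p ≤ 2k−1, then x^{⊗p} is majorized by y^{⊗p} for every integer p ≥ k. -/
import Mathlib


open Finset

/-- Sum of the `l` largest entries of `x` (maximum over subsets of size `l`),
counted with multiplicity: this is `S_l(x)` from the paper. -/
noncomputable def topSum {ι : Type*} [Fintype ι] (x : ι → ℝ) (l : ℕ) : ℝ :=
  sSup {s : ℝ | ∃ A : Finset ι, A.card = l ∧ s = ∑ i ∈ A, x i}

/-- Sum of the `l` smallest entries of `x` (minimum over subsets of size `l`). -/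
noncomputable def botSum {ι : Type*} [Fintype ι] (x : ι → ℝ) (l : ℕ) : ℝ :=
  sInf {s : ℝ | ∃ A : Finset ι, A.card = l ∧ s = ∑ i ∈ A, x i}

/-- `x` is majorized by `y` (written `x ≺ y`): for every `1 ≤ l ≤ N`,
the sum of the `l` largest entries of `x` is at most that of `y`. -/
def Majorized {ι : Type*} [Fintype ι] (x y : ι → ℝ) : Prop :=
  ∀ l : ℕ, 1 ≤ l → l ≤ Fintype.card ι → topSum x l ≤ topSum y l

/-- Tensor product of two vectors: all pairwise products of entries. -/
def tensor {ι κ : Type*} (x : ι → ℝ) (z : κ → ℝ) : ι × κ → ℝ :=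
  fun p => x p.1 * z p.2

/-- `p`-fold tensor power of a vector. -/
def tensorPow {ι : Type*} (x : ι → ℝ) (p : ℕ) : (Fin p → ι) → ℝ :=
  fun f => ∏ j, x (f j)

/-- Sum of the first `l` entries of a vector `x : Fin n → ℝ`. -/
def prefixSum {n : ℕ} (x : Fin n → ℝ) (l : ℕ) : ℝ :=
  ∑ j ∈ Finset.univ.filter (fun j : Fin n => (j : ℕ) < l), x j

/-- Sum of the entries of `x : Fin n → ℝ` from index `l` (0-based) on. -/
def suffixSum {n : ℕ} (x : Fin n → ℝ) (l : ℕ) : ℝ :=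
  ∑ j ∈ Finset.univ.filter (fun j : Fin n => l ≤ (j : ℕ)), x j

/-- `E_l(x) = 1 - S_{l-1}(x)`: the sum of the entries of the probability vector `x`
from the `l`-th largest to the smallest. -/
noncomputable def Evec {ι : Type*} [Fintype ι] (x : ι → ℝ) (l : ℕ) : ℝ :=
  1 - topSum x (l - 1)

/-- Vidal conversion probability `P(x → y) = min_{1 ≤ l ≤ N} E_l(x)/E_l(y)`. -/
noncomputable def vidalP {ι : Type*} [Fintype ι] (x y : ι → ℝ) : ℝ :=
  sInf {r : ℝ | ∃ l : ℕ, 1 ≤ l ∧ l ≤ Fintype.card ι ∧ r = Evec x l / Evec y l}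

/-- Nonincreasing rearrangement of the entries of `x`, as a list. -/
noncomputable def sortedDesc {ι : Type*} [Fintype ι] (x : ι → ℝ) : List ℝ :=
  ((Finset.univ.val.map x).sort (· ≤ ·)).reverse

set_option linter.unusedSectionVars false
set_option linter.unusedVariables false

section aux
variable {ι κ : Type*} [Fintype ι] [Fintype κ]

lemma topSumSet_eq (x : ι → ℝ) (l : ℕ) :
    {s : ℝ | ∃ A : Finset ι, A.card = l ∧ s = ∑ i ∈ A, x i}
      = ↑((univ.powersetCard l).image fun A => ∑ i ∈ A, x i) := by
  ext s
  simp only [Set.mem_setOf_eq, coe_image, Set.mem_image, mem_coe, mem_powersetCard]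
  constructor
  · rintro ⟨A, hc, rfl⟩; exact ⟨A, ⟨A.subset_univ, hc⟩, rfl⟩
  · rintro ⟨A, ⟨-, hc⟩, rfl⟩; exact ⟨A, hc, rfl⟩

lemma sum_le_topSum (x : ι → ℝ) {A : Finset ι} {l : ℕ} (h : A.card = l) :
    ∑ i ∈ A, x i ≤ topSum x l := by
  rw [topSum, topSumSet_eq]
  exact le_csSup (Finset.bddAbove _) (by
    simp only [mem_coe, mem_image, mem_powersetCard]
    exact ⟨A, ⟨A.subset_univ, h⟩, rfl⟩)

lemma topSum_exists (x : ι → ℝ) {l : ℕ} (h : l ≤ Fintype.card ι) :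
    ∃ A : Finset ι, A.card = l ∧ topSum x l = ∑ i ∈ A, x i := by
  obtain ⟨A, -, hc⟩ := Finset.exists_subset_card_eq (s := (univ : Finset ι)) (by simpa using h)
  have hne : ((univ.powersetCard l).image fun A => ∑ i ∈ A, x i).Nonempty :=
    ⟨_, mem_image_of_mem _ (mem_powersetCard.2 ⟨A.subset_univ, hc⟩)⟩
  have hmem := hne.csSup_mem
  rw [topSum, topSumSet_eq]
  have := hmem
  simp only [mem_image, mem_powersetCard] at this
  obtain ⟨B, ⟨-, hB⟩, hBs⟩ := this
  exact ⟨B, hB, hBs.symm⟩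

lemma topSum_zero (x : ι → ℝ) : topSum x 0 = 0 := by
  have : {s : ℝ | ∃ A : Finset ι, A.card = 0 ∧ s = ∑ i ∈ A, x i} = {0} := by
    ext s; simp [Finset.card_eq_zero]
  rw [topSum, this, csSup_singleton]

end aux

section aux
variable {ι κ : Type*} [Fintype ι] [Fintype κ]

lemma topSum_comp_equiv (e : κ ≃ ι) (x : ι → ℝ) (l : ℕ) :
    topSum (x ∘ e) l = topSum x l := by
  classical
  unfold topSum; congr 1; ext s
  simp only [Set.mem_setOf_eq]
  constructor
  · rintro ⟨A, hc, rfl⟩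
    exact ⟨A.image e, by rw [Finset.card_image_of_injective _ e.injective, hc],
      (Finset.sum_image (fun a _ b _ hab => e.injective hab)).symm⟩
  · rintro ⟨A, hc, rfl⟩
    refine ⟨A.image e.symm, by rw [Finset.card_image_of_injective _ e.symm.injective, hc], ?_⟩
    rw [Finset.sum_image (fun a _ b _ hab => e.symm.injective hab)]
    apply Finset.sum_congr rfl; intro i _; simp

lemma majorized_comp_equiv (e : κ ≃ ι) {x y : ι → ℝ} (h : Majorized x y) :
    Majorized (x ∘ e) (y ∘ e) := by
  intro l h1 h2
  rw [topSum_comp_equiv, topSum_comp_equiv]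
  exact h l h1 (h2.trans_eq (Fintype.card_congr e))

lemma majorized_tensor_right {x y : ι → ℝ} (z : κ → ℝ) (hz : ∀ j, 0 ≤ z j)
    (h : Majorized x y) : Majorized (tensor x z) (tensor y z) := by
  classical
  intro l h1 h2
  -- upper bound every element of the sup-set of tensor x z
  obtain ⟨B0, -, hB0⟩ := Finset.exists_subset_card_eq (s := (univ : Finset (ι × κ))) (by simpa using h2)
  rw [topSum]
  refine csSup_le ⟨∑ p ∈ B0, tensor x z p, B0, hB0, rfl⟩ ?_
  rintro s ⟨B, hBc, rfl⟩
  set a : κ → ℕ := fun j => (B.filter fun p => p.2 = j).card with ha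
  have hsum : ∑ j, a j = l := by
    rw [← hBc]; exact (Finset.card_eq_sum_card_fiberwise (fun p _ => mem_univ p.2)).symm
  have ha_le : ∀ j, a j ≤ Fintype.card ι := by
    intro j
    have : ((B.filter fun p => p.2 = j).image Prod.fst).card = a j := by
      rw [Finset.card_image_of_injOn]
      intro p hp q hq hpq
      simp only [mem_filter, mem_coe] at hp hq
      exact Prod.ext hpq (hp.2.trans hq.2.symm)
    calc a j = _ := this.symm
      _ ≤ Fintype.card ι := Finset.card_le_univ _
  -- step 1: fiberwise decomposition
  have step1 : ∑ p ∈ B, tensor x z p = ∑ j, ∑ p ∈ B.filter (fun p => p.2 = j), x p.1 * z j := by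
    rw [← Finset.sum_fiberwise_of_maps_to (fun p _ => mem_univ p.2) (tensor x z)]
    apply Finset.sum_congr rfl; intro j _
    apply Finset.sum_congr rfl; intro p hp
    simp only [mem_filter] at hp
    simp [tensor, hp.2]
  -- step 2
  have step2 : ∀ j, ∑ p ∈ B.filter (fun p => p.2 = j), x p.1 * z j ≤ z j * topSum y (a j) := by
    intro j
    have hinj : ∀ p ∈ B.filter (fun p => p.2 = j), ∀ q ∈ B.filter (fun p => p.2 = j),
        p.1 = q.1 → p = q := by
      intro p hp q hq hpq
      simp only [mem_filter] at hp hq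
      exact Prod.ext hpq (hp.2.trans hq.2.symm)
    have himg : ∑ i ∈ (B.filter fun p => p.2 = j).image Prod.fst, x i
        = ∑ p ∈ B.filter (fun p => p.2 = j), x p.1 := Finset.sum_image hinj
    have hcard : ((B.filter fun p => p.2 = j).image Prod.fst).card = a j :=
      Finset.card_image_of_injOn (fun p hp q hq hpq => hinj p hp q hq hpq)
    have hxy : topSum x (a j) ≤ topSum y (a j) := by
      rcases Nat.eq_zero_or_pos (a j) with h0 | h0
      · rw [h0, topSum_zero, topSum_zero]
      · exact h (a j) h0 (ha_le j)
    calc ∑ p ∈ B.filter (fun p => p.2 = j), x p.1 * z j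
        = z j * ∑ i ∈ (B.filter fun p => p.2 = j).image Prod.fst, x i := by
          rw [himg, ← Finset.sum_mul]; ring
      _ ≤ z j * topSum y (a j) := by
          apply mul_le_mul_of_nonneg_left _ (hz j)
          exact (sum_le_topSum x hcard).trans hxy
  -- step 3
  choose A hAc hAs using fun j => topSum_exists y (ha_le j)
  set C : Finset (ι × κ) := univ.biUnion fun j => (A j).image fun i => (i, j) with hC
  have hdisj : ∀ j ∈ (univ : Finset κ), ∀ j' ∈ (univ : Finset κ), j ≠ j' →
      Disjoint ((A j).image fun i => (i, j)) ((A j').image fun i => (i, j')) := by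
    intro j _ j' _ hjj'
    rw [Finset.disjoint_left]
    rintro p hp hp'
    simp only [mem_image] at hp hp'
    obtain ⟨i, -, rfl⟩ := hp
    obtain ⟨i', -, h'⟩ := hp'
    exact hjj' (congrArg Prod.snd h').symm
  have hCc : C.card = l := by
    rw [hC, Finset.card_biUnion hdisj]
    rw [← hsum]
    apply Finset.sum_congr rfl
    intro j _
    rw [Finset.card_image_of_injective _ (fun a b hab => (Prod.mk.injEq _ _ _ _ ▸ hab).1), hAc]
  have hCs : ∑ p ∈ C, tensor y z p = ∑ j, z j * topSum y (a j) := by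
    rw [hC, Finset.sum_biUnion]
    · apply Finset.sum_congr rfl
      intro j _
      rw [Finset.sum_image (fun a _ b _ hab => (Prod.mk.injEq _ _ _ _ ▸ hab).1)]
      simp only [tensor]
      rw [hAs j, ← Finset.sum_mul]; ring
    · intro s hs t ht hst
      exact hdisj s hs t ht hst
  calc ∑ p ∈ B, tensor x z p = ∑ j, ∑ p ∈ B.filter (fun p => p.2 = j), x p.1 * z j := step1
    _ ≤ ∑ j, z j * topSum y (a j) := Finset.sum_le_sum fun j _ => step2 j
    _ = ∑ p ∈ C, tensor y z p := hCs.symm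
    _ ≤ topSum (tensor y z) l := sum_le_topSum _ hCc

end aux

section aux
variable {ι κ : Type*} [Fintype ι] [Fintype κ]

lemma majorized_tensor_left {x y : κ → ℝ} (z : ι → ℝ) (hz : ∀ j, 0 ≤ z j)
    (h : Majorized x y) : Majorized (tensor z x) (tensor z y) := by
  have hx : tensor z x = tensor x z ∘ (Equiv.prodComm ι κ) := by
    funext p; simp [tensor, mul_comm]
  have hy : tensor z y = tensor y z ∘ (Equiv.prodComm ι κ) := by
    funext p; simp [tensor, mul_comm]
  rw [hx, hy]
  exact majorized_comp_equiv (Equiv.prodComm ι κ) (majorized_tensor_right z hz h)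

lemma majorized_tensor {x y : ι → ℝ} {x' y' : κ → ℝ}
    (hy : ∀ i, 0 ≤ y i) (hx' : ∀ j, 0 ≤ x' j)
    (h : Majorized x y) (h' : Majorized x' y') :
    Majorized (tensor x x') (tensor y y') :=
  fun l h1 h2 =>
    le_trans (majorized_tensor_right x' hx' h l h1 h2) (majorized_tensor_left y hy h' l h1 h2)

def splitEquiv (ι : Type*) (p q : ℕ) : (Fin (p + q) → ι) ≃ (Fin p → ι) × (Fin q → ι) :=
  (Equiv.arrowCongr finSumFinEquiv.symm (Equiv.refl ι)).trans
    (Equiv.sumArrowEquivProdArrow _ _ _)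

lemma tensorPow_add (x : ι → ℝ) (p q : ℕ) :
    tensorPow x (p + q) = tensor (tensorPow x p) (tensorPow x q) ∘ (splitEquiv ι p q) := by
  funext f
  simp only [Function.comp, tensor, tensorPow, splitEquiv, Equiv.trans_apply,
    Equiv.arrowCongr_apply, Equiv.sumArrowEquivProdArrow, Equiv.coe_fn_mk, Equiv.refl_apply,
    Function.comp_apply, Equiv.symm_symm]
  rw [Fin.prod_univ_add (f := fun j => x (f j))]
  simp [finSumFinEquiv]

lemma tensorPow_nonneg {x : ι → ℝ} (hx : ∀ i, 0 ≤ x i) (p : ℕ) (f : Fin p → ι) :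
    0 ≤ tensorPow x p f := Finset.prod_nonneg fun j _ => hx _

end aux


theorem stmt_1 {N : ℕ} (x y : Fin N → ℝ)
    (hx0 : ∀ i, 0 ≤ x i) (hx1 : ∑ i, x i = 1)
    (hy0 : ∀ i, 0 ≤ y i) (hy1 : ∑ i, y i = 1)
    (k : ℕ) (hk : 1 ≤ k)
    (h : ∀ p : ℕ, k ≤ p → p ≤ 2 * k - 1 →
      Majorized (tensorPow x p) (tensorPow y p)) :
    ∀ p : ℕ, k ≤ p → Majorized (tensorPow x p) (tensorPow y p) := by
  intro p
  induction p using Nat.strong_induction_on with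
  | _ p ih =>
    intro hkp
    by_cases hsmall : p ≤ 2 * k - 1
    · exact h p hkp hsmall
    · have hq : k ≤ p - k := by omega
      have hlt : p - k < p := by omega
      have hpk : p - k + k = p := by omega
      have IH := ih (p - k) hlt hq
      have Hk := h k le_rfl (by omega)
      have := majorized_comp_equiv (splitEquiv (Fin N) (p - k) k)
        (majorized_tensor (tensorPow_nonneg hy0 _) (tensorPow_nonneg hx0 _) IH Hk)
      rw [← tensorPow_add, ← tensorPow_add, hpk] at this
      exact this
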